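/- Let k be a field, q ∈ k× not a root of unity, and let a be an H-eigenvector in O_q(M_n(k)) for the standard action of the torus H = (k×)^{2n}. Then under the Levasseur–Stafford isomorphism ξ: O_q(GL_n(k)) → O_q(SL_n(k))[z^{±1}], we have ξ(a) = z^r π(a) for some integer r ≥ 0, where π is the quotient map to O_q(SL_n(k)); in particular ξ(a) is a unit multiple of π(a). -/

import Mathlib

namespace QMn

variable (k : Type) [Field k] (q : kˣ) (n : ℕ)

/-- The standard quantum matrix relations on generators `X (i,j)`. -/
inductive Rel : FreeAlgebra k (Fin n × Fin n) → FreeAlgebra k (Fin n × Fin n) → Prop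
  | row {i j m : Fin n} (h : j < m) :
      Rel (FreeAlgebra.ι k (i, j) * FreeAlgebra.ι k (i, m))
        ((q : k) • (FreeAlgebra.ι k (i, m) * FreeAlgebra.ι k (i, j)))
  | col {i l j : Fin n} (h : i < l) :
      Rel (FreeAlgebra.ι k (i, j) * FreeAlgebra.ι k (l, j))
        ((q : k) • (FreeAlgebra.ι k (l, j) * FreeAlgebra.ι k (i, j)))
  | anti {i l j m : Fin n} (h1 : i < l) (h2 : m < j) :
      Rel (FreeAlgebra.ι k (i, j) * FreeAlgebra.ι k (l, m))
        (FreeAlgebra.ι k (l, m) * FreeAlgebra.ι k (i, j))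
  | diag {i l j m : Fin n} (h1 : i < l) (h2 : j < m) :
      Rel (FreeAlgebra.ι k (i, j) * FreeAlgebra.ι k (l, m))
        (FreeAlgebra.ι k (l, m) * FreeAlgebra.ι k (i, j) +
          ((q : k) - ((q⁻¹ : kˣ) : k)) •
            (FreeAlgebra.ι k (i, m) * FreeAlgebra.ι k (l, j)))

/-- The quantum matrix algebra `O_q(M_n(k))`. -/
abbrev OqM := RingQuot (Rel k q n)

/-- The canonical generators `X_{ij}` of `O_q(M_n(k))`. -/
noncomputable def X (i j : Fin n) : OqM k q n :=
  RingQuot.mkAlgHom k (Rel k q n) (FreeAlgebra.ι k (i, j))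

/-- The length (number of inversions) of a permutation. -/
def permLen {n : ℕ} (π : Equiv.Perm (Fin n)) : ℕ :=
  ((Finset.univ : Finset (Fin n × Fin n)).filter
    fun p => p.1 < p.2 ∧ π p.2 < π p.1).card

/-- The quantum determinant of `O_q(M_n(k))`. -/
noncomputable def Dq : OqM k q n :=
  ∑ π : Equiv.Perm (Fin n),
    ((-(q : k)) ^ permLen π) • (List.ofFn fun i => X k q n i (π i)).prod

end QMn

namespace QGL

variable (k : Type) [Field k] (q : kˣ) (n : ℕ)

/-- The quantum determinant as an element of the free algebra. -/
noncomputable def Dfree : FreeAlgebra k (Fin n × Fin n) :=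
  ∑ π : Equiv.Perm (Fin n),
    ((-(q : k)) ^ QMn.permLen π) •
      (List.ofFn fun i => FreeAlgebra.ι k (i, π i)).prod

/-- Relations of `O_q(SL_n(k))`: the quantum matrix relations together with
`D_q = 1`. -/
inductive SLRel : FreeAlgebra k (Fin n × Fin n) → FreeAlgebra k (Fin n × Fin n) → Prop
  | base {x y : FreeAlgebra k (Fin n × Fin n)} : QMn.Rel k q n x y → SLRel x y
  | det : SLRel (Dfree k q n) 1

/-- The quantum special linear group `O_q(SL_n(k)) = O_q(M_n(k))/⟨D_q − 1⟩`. -/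
abbrev OqSL := RingQuot (SLRel k q n)

/-- The generators `x_{ij}` of `O_q(SL_n(k))`. -/
noncomputable def xSL (i j : Fin n) : OqSL k q n :=
  RingQuot.mkAlgHom k (SLRel k q n) (FreeAlgebra.ι k (i, j))

/-- Embedding of the free algebra on the `X_{ij}` into the free algebra with an
additional generator `E` (the inverse of the determinant). -/
noncomputable def emb : FreeAlgebra k (Fin n × Fin n) →ₐ[k]
    FreeAlgebra k ((Fin n × Fin n) ⊕ Unit) :=
  FreeAlgebra.lift k fun p => FreeAlgebra.ι k (Sum.inl p)

/-- Relations of `O_q(GL_n(k)) = O_q(M_n(k))[D_q^{-1}]`: the quantum matrix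
relations together with an inverse `E` for the quantum determinant. -/
inductive GLRel : FreeAlgebra k ((Fin n × Fin n) ⊕ Unit) →
    FreeAlgebra k ((Fin n × Fin n) ⊕ Unit) → Prop
  | base {x y : FreeAlgebra k (Fin n × Fin n)} :
      QMn.Rel k q n x y → GLRel (emb k n x) (emb k n y)
  | inv : GLRel (FreeAlgebra.ι k (Sum.inr ()) * emb k n (Dfree k q n)) 1
  | inv' : GLRel (emb k n (Dfree k q n) * FreeAlgebra.ι k (Sum.inr ())) 1

/-- The quantum general linear group `O_q(GL_n(k))`. -/
abbrev OqGL := RingQuot (GLRel k q n)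

/-- The generators `X_{ij}` of `O_q(GL_n(k))`. -/
noncomputable def XGL (i j : Fin n) : OqGL k q n :=
  RingQuot.mkAlgHom k (GLRel k q n) (FreeAlgebra.ι k (Sum.inl (i, j)))

end QGL


open LaurentPolynomial

namespace AuxLS

variable {k : Type} [Field k] {A : Type} [Ring A] [Algebra k A]

/-- `C` as a `k`-algebra hom. -/
noncomputable def CA : A →ₐ[k] LaurentPolynomial A :=
  { (LaurentPolynomial.C : A →+* LaurentPolynomial A) with
    commutes' := fun _ => rfl }

@[simp] lemma CA_apply (a : A) : (CA (k := k) a) = LaurentPolynomial.C a := rfl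

/-- The monoid hom `m ↦ t^m • T m`. -/
noncomputable def gT (t : kˣ) : Multiplicative ℤ →* LaurentPolynomial A where
  toFun m := ((t ^ (Multiplicative.toAdd m) : kˣ) : k) • T (Multiplicative.toAdd m)
  map_one' := by simp
  map_mul' x y := by
    simp only [toAdd_mul, zpow_add, Units.val_mul, smul_mul_smul_comm, ← T_add]

/-- The `k`-algebra endomorphism of `A[T;T⁻¹]` scaling `T` by `t`. -/
noncomputable def scaleT (t : kˣ) : LaurentPolynomial A →ₐ[k] LaurentPolynomial A :=
  AddMonoidAlgebra.liftNCAlgHom (CA (k := k)) (gT t)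
    (fun a m => ((LaurentPolynomial.commute_T (Multiplicative.toAdd m) (C a)).symm).smul_right _)

lemma scaleT_single (t : kˣ) (m : ℤ) (a : A) :
    scaleT t (AddMonoidAlgebra.single m a : LaurentPolynomial A)
      = AddMonoidAlgebra.single m (((t ^ m : kˣ) : k) • a) := by
  show AddMonoidAlgebra.liftNC _ _ _ = _
  rw [AddMonoidAlgebra.liftNC_single]
  show LaurentPolynomial.C a * (((t ^ m : kˣ) : k) • T m) = _
  rw [mul_smul_comm, ← single_eq_C_mul_T, AddMonoidAlgebra.smul_single]

lemma scaleT_apply (t : kˣ) (F : LaurentPolynomial A) (m : ℤ) :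
    (scaleT t F).coeff m = ((t ^ m : kˣ) : k) • F.coeff m := by
  induction F using AddMonoidAlgebra.induction_linear with
  | zero => simp
  | add f g hf hg =>
      rw [map_add, AddMonoidAlgebra.coeff_add, Finsupp.add_apply, hf, hg,
        AddMonoidAlgebra.coeff_add, Finsupp.add_apply, smul_add]
  | single m' a =>
      rw [scaleT_single, AddMonoidAlgebra.coeff_single, AddMonoidAlgebra.coeff_single]
      rcases eq_or_ne m' m with rfl | h
      · rw [Finsupp.single_eq_same, Finsupp.single_eq_same]
      · rw [Finsupp.single_eq_of_ne' h, Finsupp.single_eq_of_ne' h, smul_zero]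

/-- Evaluation at `T = 1` as a `k`-algebra hom. -/
noncomputable def evalOne : LaurentPolynomial A →ₐ[k] A :=
  AddMonoidAlgebra.liftNCAlgHom (AlgHom.id k A) 1 (fun _ _ => Commute.one_right _)

lemma evalOne_single (m : ℤ) (a : A) :
    evalOne (k := k) (AddMonoidAlgebra.single m a : LaurentPolynomial A) = a := by
  show AddMonoidAlgebra.liftNC _ _ _ = _
  rw [AddMonoidAlgebra.liftNC_single]
  simp

/-- The subalgebra of Laurent polynomials supported in nonnegative degrees. -/
noncomputable def NN : Subalgebra k (LaurentPolynomial A) where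
  carrier := {F | ∀ m : ℤ, m < 0 → F.coeff m = 0}
  add_mem' {F G} hF hG m hm := by
    rw [AddMonoidAlgebra.coeff_add, Finsupp.add_apply, hF m hm, hG m hm, add_zero]
  mul_mem' {F G} hF hG m hm := by
    classical
    rw [AddMonoidAlgebra.coeff_mul]
    refine Finset.sum_eq_zero fun a₁ ha₁ => Finset.sum_eq_zero fun a₂ ha₂ => ?_
    beta_reduce
    rw [if_neg]
    intro h
    rcases lt_or_ge a₁ 0 with h1 | h1
    · exact Finsupp.mem_support_iff.mp ha₁ (hF a₁ h1)
    rcases lt_or_ge a₂ 0 with h2 | h2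
    · exact Finsupp.mem_support_iff.mp ha₂ (hG a₂ h2)
    omega
  algebraMap_mem' r m hm := by
    show (AddMonoidAlgebra.single 0 (algebraMap k A r) : LaurentPolynomial A).coeff m = 0
    rw [AddMonoidAlgebra.coeff_single, Finsupp.single_eq_of_ne' (by omega)]

end AuxLS

namespace Aux2
open QMn
variable (k : Type) [Field k] (q : kˣ) (n : ℕ)

/-- Scaling the rows by units: an algebra endomorphism of `O_q(M_n)`. -/
noncomputable def scaleRows (w : Fin n → kˣ) : OqM k q n →ₐ[k] OqM k q n :=
  RingQuot.liftAlgHom k ⟨FreeAlgebra.lift k fun p => ((w p.1 : kˣ) : k) • X k q n p.1 p.2, by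
    intro x y h
    induction h with
    | @row i j m h =>
        have hr : X k q n i j * X k q n i m = (q : k) • (X k q n i m * X k q n i j) := by
          have h2 := RingQuot.mkAlgHom_rel k (Rel.row (k := k) (q := q) (n := n) (i := i) h)
          rw [map_mul, map_smul, map_mul] at h2
          exact h2
        simp only [map_mul, map_smul, FreeAlgebra.lift_ι_apply]
        rw [smul_mul_smul_comm, smul_mul_smul_comm, hr]
        module
    | @col i l j h =>
        have hr : X k q n i j * X k q n l j = (q : k) • (X k q n l j * X k q n i j) := by
          have h2 := RingQuot.mkAlgHom_rel k (Rel.col (k := k) (q := q) (n := n) (j := j) h)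
          rw [map_mul, map_smul, map_mul] at h2
          exact h2
        simp only [map_mul, map_smul, FreeAlgebra.lift_ι_apply]
        rw [smul_mul_smul_comm, smul_mul_smul_comm, hr]
        module
    | @anti i l j m h1 h2 =>
        have hr : X k q n i j * X k q n l m = X k q n l m * X k q n i j := by
          have h3 := RingQuot.mkAlgHom_rel k (Rel.anti (k := k) (q := q) (n := n) h1 h2)
          rw [map_mul, map_mul] at h3
          exact h3
        simp only [map_mul, FreeAlgebra.lift_ι_apply]
        rw [smul_mul_smul_comm, smul_mul_smul_comm, hr]
        module
    | @diag i l j m h1 h2 =>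
        have hr : X k q n i j * X k q n l m = X k q n l m * X k q n i j +
            ((q : k) - ((q⁻¹ : kˣ) : k)) • (X k q n i m * X k q n l j) := by
          have h3 := RingQuot.mkAlgHom_rel k (Rel.diag (k := k) (q := q) (n := n) h1 h2)
          rw [map_mul, map_add, map_mul, map_smul, map_mul] at h3
          exact h3
        simp only [map_mul, map_add, map_smul, FreeAlgebra.lift_ι_apply]
        rw [smul_mul_smul_comm, hr, smul_add, smul_mul_smul_comm, smul_mul_smul_comm]
        module⟩

@[simp] lemma scaleRows_X (w : Fin n → kˣ) (i j : Fin n) :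
    scaleRows k q n w (X k q n i j) = ((w i : kˣ) : k) • X k q n i j := by
  unfold scaleRows
  exact (RingQuot.liftAlgHom_mkAlgHom_apply _ _ _ _).trans (FreeAlgebra.lift_ι_apply _ _)

end Aux2

open LaurentPolynomial in
/-- Let `a` be an `H`-eigenvector in `O_q(M_n(k))` for the standard torus action
(i.e. every algebra endomorphism scaling the generators by `X_{ij} ↦ α_i β_j X_{ij}`
sends `a` to a `k×`-multiple of itself).  Then under the Levasseur–Stafford map
`ξ` (given here by any algebra map `Ψ : O_q(M_n(k)) → O_q(SL_n(k))[z^{±1}]` with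
`Ψ(X_{1j}) = z x_{1j}` and `Ψ(X_{ij}) = x_{ij}` for `i ≥ 2`), we have
`ξ(a) = z^r π(a)` for some integer `r ≥ 0`, where `π` is the quotient map to
`O_q(SL_n(k))`. -/
theorem eigenvector_image_is_unit_multiple (k : Type) [Field k] (q : kˣ)
    (hq : ∀ m : ℕ, 0 < m → (q : k) ^ m ≠ 1) (n : ℕ)
    (a : QMn.OqM k q (n + 1)) (ha : a ≠ 0)
    (heig : ∀ (α β : Fin (n + 1) → kˣ) (φ : QMn.OqM k q (n + 1) →ₐ[k] QMn.OqM k q (n + 1)),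
      (∀ i j : Fin (n + 1),
          φ (QMn.X k q (n + 1) i j) = ((α i * β j : kˣ) : k) • QMn.X k q (n + 1) i j) →
      ∃ c : kˣ, φ a = (c : k) • a)
    (π : QMn.OqM k q (n + 1) →ₐ[k] QGL.OqSL k q (n + 1))
    (hπ : ∀ i j : Fin (n + 1), π (QMn.X k q (n + 1) i j) = QGL.xSL k q (n + 1) i j)
    (Ψ : QMn.OqM k q (n + 1) →ₐ[k] LaurentPolynomial (QGL.OqSL k q (n + 1)))
    (hΨ1 : ∀ j : Fin (n + 1),
      Ψ (QMn.X k q (n + 1) 0 j) = C (QGL.xSL k q (n + 1) 0 j) * T 1)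
    (hΨ2 : ∀ i j : Fin (n + 1), i ≠ 0 →
      Ψ (QMn.X k q (n + 1) i j) = C (QGL.xSL k q (n + 1) i j)) :
    ∃ r : ℕ, Ψ a = C (π a) * T r := by
  classical
  -- Evaluation at `T = 1` recovers `π`.
  have hev : ∀ b, AuxLS.evalOne (k := k) (Ψ b) = π b := by
    have hcomp : (AuxLS.evalOne (k := k)).comp Ψ = π := by
      refine RingQuot.ringQuot_ext' k _ _ ?_
      refine FreeAlgebra.hom_ext ?_
      funext p
      obtain ⟨i, j⟩ := p
      show AuxLS.evalOne (Ψ (QMn.X k q (n+1) i j)) = π (QMn.X k q (n+1) i j)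
      rcases eq_or_ne i 0 with rfl | hi
      · rw [hΨ1 j, hπ, ← LaurentPolynomial.single_eq_C_mul_T (QGL.xSL k q (n+1) 0 j) 1, AuxLS.evalOne_single]
      · rw [hΨ2 i j hi, hπ, ← LaurentPolynomial.single_eq_C (QGL.xSL k q (n+1) i j), AuxLS.evalOne_single]
    intro b
    exact AlgHom.congr_fun hcomp b
  -- The image of `Ψ` has support in nonnegative degrees.
  have hNN : ∀ b, Ψ b ∈ AuxLS.NN (k := k) := by
    intro b
    obtain ⟨x, rfl⟩ := RingQuot.mkAlgHom_surjective k _ b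
    induction x using FreeAlgebra.induction with
    | grade0 r =>
        rw [AlgHom.commutes, AlgHom.commutes]
        exact Subalgebra.algebraMap_mem _ r
    | grade1 p =>
        obtain ⟨i, j⟩ := p
        show Ψ (QMn.X k q (n+1) i j) ∈ _
        rcases eq_or_ne i 0 with rfl | hi
        · rw [hΨ1 j, ← LaurentPolynomial.single_eq_C_mul_T (QGL.xSL k q (n+1) 0 j) 1]
          intro m hm
          rw [AddMonoidAlgebra.coeff_single, Finsupp.single_eq_of_ne' (by omega)]
        · rw [hΨ2 i j hi, ← LaurentPolynomial.single_eq_C (QGL.xSL k q (n+1) i j)]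
          intro m hm
          rw [AddMonoidAlgebra.coeff_single, Finsupp.single_eq_of_ne' (by omega)]
    | mul x y hx hy =>
        rw [map_mul, map_mul]
        exact mul_mem hx hy
    | add x y hx hy =>
        rw [map_add, map_add]
        exact add_mem hx hy
  -- The eigenvector property transported through `Ψ`.
  have key : ∀ t : kˣ, ∃ c : kˣ, AuxLS.scaleT t (Ψ a) = (c : k) • Ψ a := by
    intro t
    set w : Fin (n+1) → kˣ := fun i => if i = 0 then t else 1 with hw
    obtain ⟨c, hc⟩ := heig w (fun _ => 1) (Aux2.scaleRows k q (n+1) w)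
      (fun i j => by rw [Aux2.scaleRows_X, mul_one])
    have hcomm : (AuxLS.scaleT (A := QGL.OqSL k q (n+1)) t).comp Ψ
        = Ψ.comp (Aux2.scaleRows k q (n+1) w) := by
      refine RingQuot.ringQuot_ext' k _ _ ?_
      refine FreeAlgebra.hom_ext ?_
      funext p
      obtain ⟨i, j⟩ := p
      show AuxLS.scaleT t (Ψ (QMn.X k q (n+1) i j))
        = Ψ (Aux2.scaleRows k q (n+1) w (QMn.X k q (n+1) i j))
      rw [Aux2.scaleRows_X, map_smul]
      rcases eq_or_ne i 0 with rfl | hi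
      · rw [hΨ1 j, ← LaurentPolynomial.single_eq_C_mul_T (QGL.xSL k q (n+1) 0 j) 1, AuxLS.scaleT_single,
          AddMonoidAlgebra.smul_single, zpow_one]
        simp [hw]
      · rw [hΨ2 i j hi, ← LaurentPolynomial.single_eq_C (QGL.xSL k q (n+1) i j), AuxLS.scaleT_single,
          AddMonoidAlgebra.smul_single, zpow_zero]
        simp [hw, hi]
    refine ⟨c, ?_⟩
    calc AuxLS.scaleT t (Ψ a) = Ψ (Aux2.scaleRows k q (n+1) w a) := AlgHom.congr_fun hcomm a
      _ = Ψ ((c : k) • a) := by rw [hc]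
      _ = (c : k) • Ψ a := map_smul _ _ _
  -- deduce that the support of `Ψ a` is (at most) a singleton
  set F := Ψ a with hF
  have cancel : ∀ (d e : k) (x : QGL.OqSL k q (n+1)), x ≠ 0 → d • x = e • x → d = e := by
    intro d e x hx h
    by_contra hde
    have h4 : (d - e) • x = 0 := by rw [sub_smul d e x, h, sub_self]
    have h5 : x = 0 := by
      have h6 := congrArg (fun y => (d - e)⁻¹ • y) h4
      simpa [smul_smul, inv_mul_cancel₀ (sub_ne_zero.mpr hde)] using h6
    exact hx h5
  by_cases h0 : F = 0
  · refine ⟨0, ?_⟩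
    have hπ0 : π a = 0 := by rw [← hev a, ← hF, h0, map_zero]
    rw [hπ0, map_zero, zero_mul, h0]
  · obtain ⟨m₀, hm₀⟩ := Finsupp.support_nonempty_iff.mpr (AddMonoidAlgebra.coeff_eq_zero.not.mpr h0)
    have huniq : ∀ m ∈ F.coeff.support, m = m₀ := by
      intro m hm
      by_contra hne
      obtain ⟨c, hc⟩ := key q
      have coeff : ∀ m' : ℤ, ((q ^ m' : kˣ) : k) • F.coeff m' = (c : k) • F.coeff m' := by
        intro m'
        rw [← AuxLS.scaleT_apply, hc, AddMonoidAlgebra.coeff_smul_apply]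
      have e1 : ((q ^ m : kˣ) : k) = (c : k) :=
        cancel _ _ _ (Finsupp.mem_support_iff.mp hm) (coeff m)
      have e2 : ((q ^ m₀ : kˣ) : k) = (c : k) :=
        cancel _ _ _ (Finsupp.mem_support_iff.mp hm₀) (coeff m₀)
      have e3 : (q ^ m : kˣ) = q ^ m₀ := Units.ext (e1.trans e2.symm)
      have e4 : (q ^ (m - m₀) : kˣ) = 1 := by
        rw [zpow_sub, e3, mul_inv_cancel]
      have e5 : (q ^ ((m - m₀).natAbs) : kˣ) = 1 := by
        rcases Int.natAbs_eq (m - m₀) with h | h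
        · rw [← zpow_natCast, ← h, e4]
        · rw [← zpow_natCast, ← neg_neg ((m - m₀).natAbs : ℤ), ← h, zpow_neg, e4, inv_one]
      have e6 : (q : k) ^ ((m - m₀).natAbs) = 1 := by
        rw [← Units.val_pow_eq_pow_val, e5, Units.val_one]
      exact hq _ (Int.natAbs_pos.mpr (sub_ne_zero.mpr hne)) e6
    have hsub : F.coeff.support ⊆ {m₀} := fun m hm => Finset.mem_singleton.mpr (huniq m hm)
    have hsingle : F = AddMonoidAlgebra.single m₀ (F.coeff m₀) :=
        AddMonoidAlgebra.coeff_injective (Finsupp.support_subset_singleton.mp hsub)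
    have hm₀0 : 0 ≤ m₀ := by
      by_contra h
      exact Finsupp.mem_support_iff.mp hm₀ (hNN a m₀ (by omega))
    refine ⟨m₀.toNat, ?_⟩
    have hπa : π a = F.coeff m₀ := by
      rw [← hev a, ← hF, hsingle, AuxLS.evalOne_single, AddMonoidAlgebra.coeff_single,
        Finsupp.single_eq_same]
    rw [hπa, ← LaurentPolynomial.single_eq_C_mul_T (F.coeff m₀) (m₀.toNat : ℤ), Int.toNat_of_nonneg hm₀0]
    exact hsingle
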